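/- Let γ ∈ (0,1] and σ ≥ 0. There exists a constant C > 0 such that for all real x ≥ y ≥ 0, e^{⟨x⟩^γ}⟨x⟩^σ − e^{⟨y⟩^γ}⟨y⟩^σ ≤ C · (x−y)/(⟨x⟩^{1−γ} + ⟨y⟩^{1−γ}) · e^{⟨x⟩^γ}⟨x⟩^σ, where ⟨x⟩ = sqrt(1+x²). -/

import Mathlib

/-- Japanese bracket of a real number. -/
noncomputable def jb (x : ℝ) : ℝ := Real.sqrt (1 + x ^ 2)

lemma jb_ge_one (x : ℝ) : 1 ≤ jb x := by
  have : (1:ℝ) = Real.sqrt 1 := by simp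
  rw [jb, this]
  exact Real.sqrt_le_sqrt (by nlinarith)

lemma jb_mono {x y : ℝ} (h : 0 ≤ y) (h2 : y ≤ x) : jb y ≤ jb x :=
  Real.sqrt_le_sqrt (by nlinarith)

lemma jb_sq (x : ℝ) : jb x ^ 2 = 1 + x ^ 2 := by
  rw [jb, sq, Real.mul_self_sqrt (by positivity)]

lemma jb_lip {x y : ℝ} (h : 0 ≤ y) (h2 : y ≤ x) : jb x - jb y ≤ x - y := by
  have hx : x ≤ jb x := by nlinarith [jb_sq x, jb_ge_one x, h, h2]
  have hy : y ≤ jb y := by nlinarith [jb_sq y, jb_ge_one y, h]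
  have key : (jb x - jb y) * (jb x + jb y) = (x - y) * (x + y) := by
    nlinarith [jb_sq x, jb_sq y]
  nlinarith [jb_mono h h2, jb_ge_one x, jb_ge_one y]

set_option maxHeartbeats 1000000 in
theorem gevrey_weight_difference (γ σ : ℝ) (hγ0 : 0 < γ) (hγ1 : γ ≤ 1) (hσ : 0 ≤ σ) :
    ∃ C > 0, ∀ x y : ℝ, 0 ≤ y → y ≤ x →
      Real.exp (jb x ^ γ) * jb x ^ σ - Real.exp (jb y ^ γ) * jb y ^ σ ≤
        C * ((x - y) / (jb x ^ (1 - γ) + jb y ^ (1 - γ))) *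
          (Real.exp (jb x ^ γ) * jb x ^ σ) := by
  refine ⟨4 + 4*γ + 4*σ, by positivity, fun x y hy hxy => ?_⟩
  set X := jb x with hXdef
  set Y := jb y with hYdef
  have hX1 : 1 ≤ X := jb_ge_one x
  have hY1 : 1 ≤ Y := jb_ge_one y
  have hYX : Y ≤ X := jb_mono hy hxy
  have hXpos : 0 < X := by linarith
  have hYpos : 0 < Y := by linarith
  have hdiff : X - Y ≤ x - y := jb_lip hy hxy
  set A : ℝ := X ^ γ + σ * Real.log X with hA
  set B : ℝ := Y ^ γ + σ * Real.log Y with hB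
  have hXσ : X ^ σ = Real.exp (σ * Real.log X) := by
    rw [Real.rpow_def_of_pos hXpos, mul_comm]
  have hYσ : Y ^ σ = Real.exp (σ * Real.log Y) := by
    rw [Real.rpow_def_of_pos hYpos, mul_comm]
  have heX : Real.exp (X ^ γ) * X ^ σ = Real.exp A := by
    rw [hA, Real.exp_add, hXσ]
  have heY : Real.exp (Y ^ γ) * Y ^ σ = Real.exp B := by
    rw [hB, Real.exp_add, hYσ]
  rw [heX, heY]
  set D : ℝ := X ^ (1 - γ) + Y ^ (1 - γ) with hD
  have hX1γpos : 0 < X ^ (1 - γ) := Real.rpow_pos_of_pos hXpos _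
  have hY1γpos : 0 < Y ^ (1 - γ) := Real.rpow_pos_of_pos hYpos _
  have hDpos : 0 < D := by positivity
  have hDle : D ≤ 2 * X ^ (1 - γ) := by
    have : Y ^ (1 - γ) ≤ X ^ (1 - γ) :=
      Real.rpow_le_rpow (le_of_lt hYpos) hYX (by linarith)
    rw [hD]; linarith
  have hX1γleX : X ^ (1 - γ) ≤ X := by
    calc X ^ (1 - γ) ≤ X ^ (1:ℝ) := Real.rpow_le_rpow_of_exponent_le hX1 (by linarith)
    _ = X := Real.rpow_one X
  by_cases hc : X ≤ 2 * Y
  · -- Y ≥ X/2 : use the derivative-type bound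
    set u : ℝ := (X - Y) / D with hu
    have hunn : 0 ≤ u := div_nonneg (by linarith) hDpos.le
    have hAB : A - B ≤ (4*γ + 4*σ) * u := by
      have hBern : X ^ γ ≤ Y ^ γ + γ * (X - Y) * Y ^ (γ - 1) := by
        have h0 : 0 ≤ (X - Y) / Y := div_nonneg (by linarith) hYpos.le
        have hs : -1 ≤ (X - Y) / Y := by linarith
        have h1 : (1 + (X - Y)/Y) ^ γ ≤ 1 + γ * ((X - Y)/Y) :=
          rpow_one_add_le_one_add_mul_self hs (le_of_lt hγ0) hγ1
        have hXY : Y * (1 + (X - Y)/Y) = X := by field_simp; ring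
        have h3 : Y ^ γ * (1 + γ * ((X - Y)/Y)) = Y ^ γ + γ * (X - Y) * Y ^ (γ - 1) := by
          rw [Real.rpow_sub hYpos, Real.rpow_one]
          field_simp
        calc X ^ γ = (Y * (1 + (X - Y)/Y)) ^ γ := by rw [hXY]
          _ = Y ^ γ * (1 + (X - Y)/Y) ^ γ :=
              Real.mul_rpow hYpos.le (by linarith)
          _ ≤ Y ^ γ * (1 + γ * ((X - Y)/Y)) :=
              mul_le_mul_of_nonneg_left h1 (by positivity)
          _ = Y ^ γ + γ * (X - Y) * Y ^ (γ - 1) := h3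
      have hYpow : Y ^ (γ - 1) ≤ 4 / D := by
        have h1 : Y ^ (γ - 1) = (Y ^ (1 - γ))⁻¹ := by
          rw [← Real.rpow_neg hYpos.le]; ring_nf
        have h2 : X ^ (1 - γ) ≤ (2*Y) ^ (1 - γ) :=
          Real.rpow_le_rpow hXpos.le hc (by linarith)
        have h3 : (2*Y) ^ (1 - γ) = 2 ^ (1-γ) * Y ^ (1-γ) :=
          Real.mul_rpow (by norm_num) hYpos.le
        have h4 : (2:ℝ) ^ (1-γ) ≤ 2 ^ (1:ℝ) :=
          Real.rpow_le_rpow_of_exponent_le (by norm_num) (by linarith)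
        have h5 : D ≤ 4 * Y ^ (1 - γ) := by
          rw [Real.rpow_one] at h4
          nlinarith [hY1γpos.le]
        rw [h1, inv_eq_one_div, div_le_div_iff₀ hY1γpos hDpos]
        linarith
      have hlog : Real.log X - Real.log Y ≤ 4 * u := by
        have h1 : Real.log X - Real.log Y = Real.log (X / Y) :=
          (Real.log_div (ne_of_gt hXpos) (ne_of_gt hYpos)).symm
        have h2 : Real.log (X / Y) ≤ X / Y - 1 :=
          Real.log_le_sub_one_of_pos (by positivity)
        have h3 : X / Y - 1 = (X - Y) / Y := by field_simp
        have hDX : D ≤ 4 * Y := by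
          calc D ≤ 2 * X ^ (1-γ) := hDle
            _ ≤ 2 * X := by linarith
            _ ≤ 4 * Y := by linarith
        have h4 : (X - Y)/Y ≤ 4 * (X - Y) / D := by
          rw [div_le_div_iff₀ hYpos hDpos]
          have := mul_le_mul_of_nonneg_left hDX (sub_nonneg.2 hYX)
          nlinarith
        have h5 : 4 * (X - Y) / D = 4 * u := by rw [hu]; ring
        linarith [h1, h2, h3, h4, h5]
      have hfinal : γ * (X - Y) * Y ^ (γ - 1) ≤ 4 * γ * u := by
        calc γ * (X - Y) * Y ^ (γ - 1) ≤ γ * (X - Y) * (4 / D) := by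
              apply mul_le_mul_of_nonneg_left hYpow
              have : 0 ≤ X - Y := by linarith
              positivity
          _ = 4 * γ * u := by rw [hu]; ring
      have hσlog : σ * (Real.log X - Real.log Y) ≤ σ * (4 * u) :=
        mul_le_mul_of_nonneg_left hlog hσ
      have hABeq : A - B = (X ^ γ - Y ^ γ) + σ * (Real.log X - Real.log Y) := by
        rw [hA, hB]; ring
      rw [hABeq]
      have hsum : 4 * γ * u + σ * (4 * u) = (4*γ + 4*σ) * u := by ring
      linarith [hBern, hfinal, hσlog]
    have hkey : Real.exp A - Real.exp B ≤ (A - B) * Real.exp A := by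
      have h := Real.add_one_le_exp (B - A)
      have h2 : Real.exp (B - A) * Real.exp A = Real.exp B := by
        rw [← Real.exp_add]; ring_nf
      nlinarith [mul_le_mul_of_nonneg_right h (Real.exp_pos A).le, h2]
    have hvnn : 0 ≤ (x - y)/D := div_nonneg (by linarith) hDpos.le
    have huv : u ≤ (x - y)/D := by
      rw [hu]
      exact div_le_div_of_nonneg_right hdiff hDpos.le |>.trans_eq rfl
    have hABfin : A - B ≤ (4 + 4*γ + 4*σ) * ((x - y)/D) := by
      calc A - B ≤ (4*γ + 4*σ) * u := hAB
        _ ≤ (4*γ + 4*σ) * ((x - y)/D) :=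
            mul_le_mul_of_nonneg_left huv (by positivity)
        _ ≤ (4 + 4*γ + 4*σ) * ((x - y)/D) :=
            mul_le_mul_of_nonneg_right (by linarith) hvnn
    calc Real.exp A - Real.exp B ≤ (A - B) * Real.exp A := hkey
      _ ≤ ((4 + 4*γ + 4*σ) * ((x - y)/D)) * Real.exp A :=
          mul_le_mul_of_nonneg_right hABfin (Real.exp_pos A).le
  · -- X > 2Y : the difference quotient is bounded below
    push_neg at hc
    have hvnn : 0 ≤ (x - y)/D := div_nonneg (by linarith) hDpos.le
    have h2 : (1:ℝ) ≤ 4 * ((x - y)/D) := by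
      have hxy4 : X / 2 ≤ x - y := by linarith
      have hD4 : D ≤ 2 * X := by
        calc D ≤ 2 * X ^ (1-γ) := hDle
          _ ≤ 2 * X := by linarith
      rw [show 4 * ((x - y)/D) = (4*(x-y))/D by ring, le_div_iff₀ hDpos, one_mul]
      nlinarith
    have h3 : Real.exp A - Real.exp B ≤ Real.exp A := by
      linarith [(Real.exp_pos B).le]
    calc Real.exp A - Real.exp B ≤ Real.exp A := h3
      _ = 1 * Real.exp A := (one_mul _).symm
      _ ≤ (4 * ((x - y)/D)) * Real.exp A :=
          mul_le_mul_of_nonneg_right h2 (Real.exp_pos A).le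
      _ ≤ (4 + 4*γ + 4*σ) * ((x - y)/D) * Real.exp A := by
          have : 4 * ((x - y)/D) ≤ (4 + 4*γ + 4*σ) * ((x - y)/D) :=
            mul_le_mul_of_nonneg_right (by linarith) hvnn
          exact mul_le_mul_of_nonneg_right this (Real.exp_pos A).le
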